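/- Let Γ be a (v,k,λ)-graph with k > λ and let f(x) = k²x/(k+λ(x-1)) + x. Then for any nonempty X ⊆ V(Γ), |N(X)| ≥ f(|X| - f⁻¹(|X|)) - |X|. -/

import Mathlib

open Finset

lemma expand_bound {V : Type*} [Fintype V] [DecidableEq V]
    (G : SimpleGraph V) [DecidableRel G.Adj] (k lam : ℕ)
    (hdeg : ∀ u : V, G.degree u = k)
    (P : Finset V)
    (hlamP : ∀ u w : V, u ≠ w → u ∈ P → w ∈ P →
      (G.neighborFinset u ∩ G.neighborFinset w).card = lam)
    (A : Finset V) (hA : A ⊆ P) :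
    ((k:ℝ) * A.card)^2 ≤ ((A.biUnion fun u => G.neighborFinset u).card : ℝ) *
      ((k:ℝ) * A.card + (lam:ℝ) * (A.card * ((A.card:ℝ) - 1))) := by
  classical
  set N := A.biUnion fun u => G.neighborFinset u with hN
  have hnbrN : ∀ u ∈ A, G.neighborFinset u ⊆ N := fun u hu y hy => mem_biUnion.mpr ⟨u, hu, hy⟩
  have hdegF : ∀ u : V, (G.neighborFinset u).card = k := by
    intro u; rw [G.card_neighborFinset_eq_degree u, hdeg u]
  have hfiltN : ∀ u ∈ A, (N.filter fun y => G.Adj u y) = G.neighborFinset u := by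
    intro u hu
    ext y
    simp only [mem_filter, SimpleGraph.mem_neighborFinset]
    exact ⟨fun h => h.2, fun h => ⟨hnbrN u hu ((SimpleGraph.mem_neighborFinset G u y).mpr h), h⟩⟩
  have hdef : ∀ y : V, ((A.filter fun u => G.Adj u y).card : ℝ)
      = ∑ u ∈ A, (if G.Adj u y then (1:ℝ) else 0) := by
    intro y; rw [Finset.sum_boole]
  have h1 : ∑ y ∈ N, ((A.filter fun u => G.Adj u y).card : ℝ) = (k:ℝ) * A.card := by
    calc ∑ y ∈ N, ((A.filter fun u => G.Adj u y).card : ℝ)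
        = ∑ y ∈ N, ∑ u ∈ A, (if G.Adj u y then (1:ℝ) else 0) :=
          Finset.sum_congr rfl fun y _ => hdef y
      _ = ∑ u ∈ A, ∑ y ∈ N, (if G.Adj u y then (1:ℝ) else 0) := Finset.sum_comm
      _ = ∑ u ∈ A, (k:ℝ) := by
          apply Finset.sum_congr rfl
          intro u hu
          rw [Finset.sum_boole, hfiltN u hu]
          exact_mod_cast congrArg (Nat.cast (R := ℝ)) (hdegF u)
      _ = (k:ℝ) * A.card := by rw [Finset.sum_const, nsmul_eq_mul, mul_comm]
  have h2 : ∑ y ∈ N, (((A.filter fun u => G.Adj u y).card : ℝ))^2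
      = (k:ℝ) * A.card + (lam:ℝ) * (A.card * ((A.card:ℝ) - 1)) := by
    have step : ∀ y ∈ N, (((A.filter fun u => G.Adj u y).card : ℝ))^2
        = ∑ u ∈ A, ∑ w ∈ A, (if G.Adj u y ∧ G.Adj w y then (1:ℝ) else 0) := by
      intro y _
      rw [sq, hdef y, Finset.sum_mul_sum]
      apply Finset.sum_congr rfl; intro u _
      apply Finset.sum_congr rfl; intro w _
      by_cases h1 : G.Adj u y <;> by_cases h2 : G.Adj w y <;> simp [h1, h2]
    rw [Finset.sum_congr rfl step, Finset.sum_comm]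
    have swap2 : ∀ u ∈ A, ∑ y ∈ N, ∑ w ∈ A, (if G.Adj u y ∧ G.Adj w y then (1:ℝ) else 0)
        = ∑ w ∈ A, ∑ y ∈ N, (if G.Adj u y ∧ G.Adj w y then (1:ℝ) else 0) :=
      fun u _ => Finset.sum_comm
    rw [Finset.sum_congr rfl swap2]
    have inner : ∀ u ∈ A, ∀ w : V, ∑ y ∈ N, (if G.Adj u y ∧ G.Adj w y then (1:ℝ) else 0)
        = ((G.neighborFinset u ∩ G.neighborFinset w).card : ℝ) := by
      intro u hu w
      rw [Finset.sum_boole]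
      have : N.filter (fun y => G.Adj u y ∧ G.Adj w y) = G.neighborFinset u ∩ G.neighborFinset w := by
        ext y
        simp only [mem_filter, mem_inter, SimpleGraph.mem_neighborFinset]
        constructor
        · exact fun h => h.2
        · exact fun h => ⟨hnbrN u hu ((SimpleGraph.mem_neighborFinset G u y).mpr h.1), h⟩
      rw [this]
    calc ∑ u ∈ A, ∑ w ∈ A, ∑ y ∈ N, (if G.Adj u y ∧ G.Adj w y then (1:ℝ) else 0)
        = ∑ u ∈ A, ((k:ℝ) + (lam:ℝ) * ((A.card:ℝ) - 1)) := by
          apply Finset.sum_congr rfl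
          intro u hu
          rw [Finset.sum_congr rfl (fun w _ => inner u hu w)]
          rw [← Finset.add_sum_erase A _ hu]
          have t1 : ((G.neighborFinset u ∩ G.neighborFinset u).card : ℝ) = (k:ℝ) := by
            rw [Finset.inter_self]; exact_mod_cast congrArg (Nat.cast (R := ℝ)) (hdegF u)
          have t2 : ∑ w ∈ A.erase u, ((G.neighborFinset u ∩ G.neighborFinset w).card : ℝ)
              = (lam:ℝ) * ((A.card:ℝ) - 1) := by
            have : ∀ w ∈ A.erase u, ((G.neighborFinset u ∩ G.neighborFinset w).card : ℝ) = (lam:ℝ) := by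
              intro w hw
              have hwne : w ≠ u := (Finset.mem_erase.mp hw).1
              have hwA : w ∈ A := (Finset.mem_erase.mp hw).2
              exact_mod_cast congrArg (Nat.cast (R := ℝ))
                (hlamP u w (Ne.symm hwne) (hA hu) (hA hwA))
            rw [Finset.sum_congr rfl this, Finset.sum_const, nsmul_eq_mul,
              Finset.card_erase_of_mem hu]
            have h1A : 1 ≤ A.card := Finset.card_pos.mpr ⟨u, hu⟩
            rw [mul_comm]
            congr 1
            push_cast [h1A]
            ring
          rw [t1, t2]
      _ = (k:ℝ) * A.card + (lam:ℝ) * (A.card * ((A.card:ℝ) - 1)) := by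
          rw [Finset.sum_const, nsmul_eq_mul]; ring
  have CS := sq_sum_le_card_mul_sum_sq (s := N) (f := fun y => ((A.filter fun u => G.Adj u y).card : ℝ))
  rw [h1, h2] at CS
  exact CS


lemma lam_bound {V : Type*} [Fintype V] [DecidableEq V]
    (G : SimpleGraph V) [DecidableRel G.Adj] (k lam : ℕ)
    (hdeg : ∀ u : V, G.degree u = k)
    (P : Finset V)
    (hlamP : ∀ u w : V, u ≠ w → u ∈ P → w ∈ P →
      (G.neighborFinset u ∩ G.neighborFinset w).card = lam)
    (u : V) (hu : u ∈ P) :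
    lam * (P.card - 1) ≤ k * (k - 1) := by
  classical
  have hdegF : ∀ x : V, (G.neighborFinset x).card = k := by
    intro x; rw [G.card_neighborFinset_eq_degree x, hdeg x]
  have h1 : lam * (P.card - 1) = ∑ w ∈ P.erase u, (G.neighborFinset u ∩ G.neighborFinset w).card := by
    rw [Finset.sum_congr rfl (fun w hw =>
      hlamP u w (Ne.symm (Finset.mem_erase.mp hw).1) hu ((Finset.mem_erase.mp hw).2))]
    rw [Finset.sum_const, smul_eq_mul, Finset.card_erase_of_mem hu, mul_comm]
  rw [h1]
  have h2 : ∀ w : V, (G.neighborFinset u ∩ G.neighborFinset w).card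
      = ∑ y ∈ G.neighborFinset u, if G.Adj w y then 1 else 0 := by
    intro w
    rw [← Finset.card_filter]
    congr 1
    ext y
    simp only [mem_filter, mem_inter, SimpleGraph.mem_neighborFinset]
  rw [Finset.sum_congr rfl (fun w _ => h2 w), Finset.sum_comm]
  have h3 : ∀ y ∈ G.neighborFinset u,
      (∑ w ∈ P.erase u, if G.Adj w y then 1 else 0) ≤ k - 1 := by
    intro y hy
    rw [← Finset.card_filter]
    have hsub : (P.erase u).filter (fun w => G.Adj w y) ⊆ (G.neighborFinset y).erase u := by
      intro w hw
      obtain ⟨hw1, hw2⟩ := Finset.mem_filter.mp hw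
      exact Finset.mem_erase.mpr ⟨(Finset.mem_erase.mp hw1).1,
        (SimpleGraph.mem_neighborFinset G y w).mpr hw2.symm⟩
    have huy : u ∈ G.neighborFinset y :=
      (SimpleGraph.mem_neighborFinset G y u).mpr ((SimpleGraph.mem_neighborFinset G u y).mp hy).symm
    calc ((P.erase u).filter (fun w => G.Adj w y)).card
        ≤ ((G.neighborFinset y).erase u).card := Finset.card_le_card hsub
      _ = k - 1 := by rw [Finset.card_erase_of_mem huy, hdegF y]
  calc ∑ y ∈ G.neighborFinset u, ∑ w ∈ P.erase u, (if G.Adj w y then 1 else 0)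
      ≤ ∑ y ∈ G.neighborFinset u, (k-1) := Finset.sum_le_sum h3
    _ = k * (k-1) := by rw [Finset.sum_const, smul_eq_mul, hdegF u]


lemma Gmono {K c l x y : ℝ} (hK : 0 ≤ K) (hc : 0 < c) (hl : 0 ≤ l)
    (hx : 0 ≤ x) (hxy : x ≤ y) : K*x/(c+l*x) ≤ K*y/(c+l*y) := by
  have h1 : 0 < c + l*x := by nlinarith
  have h2 : 0 < c + l*y := by nlinarith
  rw [div_le_div_iff₀ h1 h2]
  nlinarith [mul_nonneg (mul_nonneg hK hc.le) (sub_nonneg.2 hxy)]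

lemma Gfour {K c l zz a b s : ℝ} (hK : 0 ≤ K) (hc : 0 < c) (hl : 0 ≤ l)
    (hz : 0 ≤ zz) (hzb : zz ≤ b) (hza : zz ≤ a) (hs : zz + s = a + b) :
    K*zz/(c+l*zz) + K*s/(c+l*s) ≤ K*a/(c+l*a) + K*b/(c+l*b) := by
  have hsa : a ≤ s := by linarith
  have hsb : b ≤ s := by linarith
  have d0 : 0 < c + l*zz := by nlinarith
  have d1 : 0 < c + l*a := by nlinarith
  have d2 : 0 < c + l*b := by nlinarith
  have d3 : 0 < c + l*s := by nlinarith
  have e1 : K*s/(c+l*s) - K*a/(c+l*a) = K*c*(s-a)/((c+l*s)*(c+l*a)) := by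
    rw [div_sub_div _ _ d3.ne' d1.ne']
    ring
  have e2 : K*b/(c+l*b) - K*zz/(c+l*zz) = K*c*(b-zz)/((c+l*b)*(c+l*zz)) := by
    rw [div_sub_div _ _ d2.ne' d0.ne']
    ring
  have key : K*c*(s-a)/((c+l*s)*(c+l*a)) ≤ K*c*(b-zz)/((c+l*b)*(c+l*zz)) := by
    have hba : s - a = b - zz := by linarith
    rw [hba]
    exact div_le_div_of_nonneg_left (mul_nonneg (mul_nonneg hK hc.le) (by linarith)) (by positivity)
      (mul_le_mul (by nlinarith) (by nlinarith) (le_of_lt d0) (le_of_lt d3))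
  linarith


lemma Gle {K c l n x kk : ℝ} (hc : 0 < c) (hl : 0 ≤ l) (hx : 0 ≤ x) (hn : 0 ≤ n)
    (hK : K = kk^2) (hck : c = kk - l)
    (h : (kk*x)^2 ≤ n*(kk*x + l*(x*(x-1)))) : K*x/(c+l*x) ≤ n := by
  have hden : 0 < c + l*x := by nlinarith
  rcases eq_or_lt_of_le hx with h0 | h0
  · rw [← h0]
    simpa using hn
  · rw [div_le_iff₀ hden]
    have e : (kk*x)^2 = K*x*x := by rw [hK]; ring
    have e2 : n*(kk*x + l*(x*(x-1))) = n*(c+l*x)*x := by rw [hck]; ring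
    rw [e, e2] at h
    exact le_of_mul_le_mul_right h h0

lemma Gself {K c l x vv : ℝ} (hc : 0 < c) (hl : 0 ≤ l) (hx : 0 ≤ x) (hxv : x ≤ vv)
    (hbig : c + l*vv ≤ K) : x ≤ K*x/(c+l*x) := by
  have hden : 0 < c + l*x := by nlinarith
  rw [le_div_iff₀ hden]
  have h1 : l*x ≤ l*vv := mul_le_mul_of_nonneg_left hxv hl
  have h2 : 0 ≤ (K - (c+l*x)) * x := mul_nonneg (by linarith) hx
  nlinarith [h2]

lemma kbig {kk ll vv : ℝ} (h : ll*(vv-1) ≤ kk*(kk-1)) : (kk - ll) + ll*vv ≤ kk^2 := by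
  nlinarith

theorem stmt18 {V : Type*} [Fintype V] [DecidableEq V]
    (G : SimpleGraph V) [DecidableRel G.Adj]
    (V1 V2 : Finset V) (hunion : V1 ∪ V2 = Finset.univ) (hdisj : Disjoint V1 V2)
    (v k lam : ℕ) (hk : 0 < k) (hkl : lam < k)
    (hv1 : V1.card = v) (hv2 : V2.card = v)
    (hbip : ∀ u w : V, G.Adj u w → (u ∈ V1 ∧ w ∈ V2) ∨ (u ∈ V2 ∧ w ∈ V1))
    (hdeg : ∀ u : V, G.degree u = k)
    (hlam : ∀ u w : V, u ≠ w →
      ((u ∈ V1 ∧ w ∈ V1) ∨ (u ∈ V2 ∧ w ∈ V2)) →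
      (G.neighborFinset u ∩ G.neighborFinset w).card = lam)
    (f : ℝ → ℝ)
    (hf : ∀ x : ℝ, f x = (k : ℝ)^2 * x / (k + lam * (x - 1)) + x)
    (X : Finset V) (hX : X.Nonempty)
    (z : ℝ) (hz : z ∈ Set.Icc (0 : ℝ) (v : ℝ)) (hfz : f z = X.card) :
    f ((X.card : ℝ) - z) - X.card ≤
      (((X.biUnion (fun u => G.neighborFinset u)) \ X).card : ℝ) := by
  classical
  obtain ⟨z0, zv⟩ := hz
  set A := X ∩ V1 with hAdef
  set B := X ∩ V2 with hBdef
  have hAV1 : A ⊆ V1 := inter_subset_right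
  have hBV2 : B ⊆ V2 := inter_subset_right
  have hXeq : A ∪ B = X := by
    rw [hAdef, hBdef, ← Finset.inter_union_distrib_left, hunion, Finset.inter_univ]
  have hABd : Disjoint A B := hdisj.mono hAV1 hBV2
  have hcardX : X.card = A.card + B.card := by
    rw [← hXeq, Finset.card_union_of_disjoint hABd]
  have hside1 : ∀ u ∈ V1, G.neighborFinset u ⊆ V2 := by
    intro u hu y hy
    rcases hbip u y ((SimpleGraph.mem_neighborFinset G u y).mp hy) with ⟨_, h2⟩ | ⟨h1, _⟩
    · exact h2
    · exact absurd h1 (Finset.disjoint_left.mp hdisj hu)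
  have hside2 : ∀ u ∈ V2, G.neighborFinset u ⊆ V1 := by
    intro u hu y hy
    rcases hbip u y ((SimpleGraph.mem_neighborFinset G u y).mp hy) with ⟨h1, _⟩ | ⟨_, h2⟩
    · exact absurd h1 (Finset.disjoint_right.mp hdisj hu)
    · exact h2
  set NA := A.biUnion (fun u => G.neighborFinset u) with hNAdef
  set NB := B.biUnion (fun u => G.neighborFinset u) with hNBdef
  set Nx := X.biUnion (fun u => G.neighborFinset u) with hNxdef
  have hNAV2 : NA ⊆ V2 := Finset.biUnion_subset.mpr fun u hu => hside1 u (hAV1 hu)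
  have hNBV1 : NB ⊆ V1 := Finset.biUnion_subset.mpr fun u hu => hside2 u (hBV2 hu)
  have hNANx : NA ⊆ Nx :=
    Finset.biUnion_subset_biUnion_of_subset_left _ Finset.inter_subset_left
  have hNBNx : NB ⊆ Nx :=
    Finset.biUnion_subset_biUnion_of_subset_left _ Finset.inter_subset_left
  have hdisjNN : Disjoint (NA \ X) (NB \ X) :=
    hdisj.symm.mono ((Finset.sdiff_subset).trans hNAV2) ((Finset.sdiff_subset).trans hNBV1)
  have hb1 : (NA \ X).card + (NB \ X).card ≤ (Nx \ X).card := by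
    rw [← Finset.card_union_of_disjoint hdisjNN]
    apply Finset.card_le_card
    exact Finset.union_subset (Finset.sdiff_subset_sdiff hNANx le_rfl)
      (Finset.sdiff_subset_sdiff hNBNx le_rfl)
  have hb2 : NA.card ≤ (NA \ X).card + B.card := by
    have h := Finset.card_sdiff_add_card_inter NA X
    have hsub : NA ∩ X ⊆ B := by
      intro y hy
      rw [hBdef, Finset.mem_inter]
      exact ⟨(Finset.mem_inter.mp hy).2, hNAV2 (Finset.mem_inter.mp hy).1⟩
    have := Finset.card_le_card hsub
    omega
  have hb3 : NB.card ≤ (NB \ X).card + A.card := by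
    have h := Finset.card_sdiff_add_card_inter NB X
    have hsub : NB ∩ X ⊆ A := by
      intro y hy
      rw [hAdef, Finset.mem_inter]
      exact ⟨(Finset.mem_inter.mp hy).2, hNBV1 (Finset.mem_inter.mp hy).1⟩
    have := Finset.card_le_card hsub
    omega
  have EA := expand_bound G k lam hdeg V1
    (fun u w hne hu hw => hlam u w hne (Or.inl ⟨hu, hw⟩)) A hAV1
  have EB := expand_bound G k lam hdeg V2
    (fun u w hne hu hw => hlam u w hne (Or.inr ⟨hu, hw⟩)) B hBV2
  have hv_pos : 1 ≤ v := by
    obtain ⟨x, hx⟩ := hX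
    have : x ∈ V1 ∪ V2 := by rw [hunion]; exact Finset.mem_univ x
    rcases Finset.mem_union.mp this with h | h
    · calc 1 ≤ V1.card := Finset.card_pos.mpr ⟨x, h⟩
        _ = v := hv1
    · calc 1 ≤ V2.card := Finset.card_pos.mpr ⟨x, h⟩
        _ = v := hv2
  have hV1ne : V1.Nonempty := Finset.card_pos.mp (hv1 ▸ hv_pos)
  obtain ⟨u0, hu0⟩ := hV1ne
  have hlamv : lam * (v - 1) ≤ k * (k - 1) := by
    have := lam_bound G k lam hdeg V1
      (fun u w hne hu hw => hlam u w hne (Or.inl ⟨hu, hw⟩)) u0 hu0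
    rwa [hv1] at this
  -- move to ℝ
  set a : ℝ := (A.card : ℝ) with hadef
  set b : ℝ := (B.card : ℝ) with hbdef
  set l : ℝ := (lam : ℝ) with hldef
  set c : ℝ := (k : ℝ) - l with hcdef
  set K : ℝ := (k : ℝ)^2 with hKdef
  have hlk : l < (k : ℝ) := by rw [hldef]; exact_mod_cast hkl
  have hc : 0 < c := by rw [hcdef]; linarith
  have hl : 0 ≤ l := by rw [hldef]; positivity
  have hK : 0 ≤ K := by rw [hKdef]; positivity
  have ha0 : 0 ≤ a := Nat.cast_nonneg _
  have hb0 : 0 ≤ b := Nat.cast_nonneg _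
  have hav : a ≤ (v : ℝ) := by
    rw [hadef]; exact_mod_cast (Finset.card_le_card hAV1).trans_eq hv1
  have hbv : b ≤ (v : ℝ) := by
    rw [hbdef]; exact_mod_cast (Finset.card_le_card hBV2).trans_eq hv2
  have hKbig : c + l * (v : ℝ) ≤ K := by
    rw [hcdef, hKdef]
    apply kbig
    have h1 : l * ((v : ℝ) - 1) = ((lam * (v - 1) : ℕ) : ℝ) := by
      rw [hldef]
      push_cast [Nat.cast_sub hv_pos]
      ring
    have h3 : ((k * (k - 1) : ℕ) : ℝ) = (k : ℝ) * ((k : ℝ) - 1) := by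
      push_cast [Nat.cast_sub hk]
      ring
    rw [h1, ← h3]
    exact_mod_cast hlamv
  have hGA : K * a / (c + l * a) ≤ (NA.card : ℝ) :=
    Gle hc hl ha0 (Nat.cast_nonneg _) hKdef hcdef EA
  have hGB : K * b / (c + l * b) ≤ (NB.card : ℝ) :=
    Gle hc hl hb0 (Nat.cast_nonneg _) hKdef hcdef EB
  have hGa_self : a ≤ K * a / (c + l * a) := Gself hc hl ha0 hav hKbig
  have hGb_self : b ≤ K * b / (c + l * b) := Gself hc hl hb0 hbv hKbig
  have hfG : ∀ x : ℝ, f x = K * x / (c + l * x) + x := by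
    intro x
    rw [hf x]
    have e : (k : ℝ) + (lam : ℝ) * (x - 1) = c + l * x := by rw [hcdef, hldef]; ring
    rw [e, hKdef]
  have hfzG : K * z / (c + l * z) + z = a + b := by
    rw [← hfG z, hfz, hcardX, hadef, hbdef]
    push_cast
    ring
  have hK' : 0 ≤ K := hK
  have hinv : ∀ y : ℝ, 0 ≤ y → a + b ≤ K * y / (c + l * y) + y → z ≤ y := by
    intro y hy hle
    by_contra h
    push_neg at h
    have := Gmono hK' hc hl hy (le_of_lt h)
    linarith
  have hinv2 : ∀ y : ℝ, 0 ≤ y → K * y / (c + l * y) + y < a + b → y < z := by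
    intro y hy hlt
    by_contra h
    push_neg at h
    have := Gmono hK' hc hl z0 h
    linarith
  have hbd1 : ((NA \ X).card : ℝ) + ((NB \ X).card : ℝ) ≤ ((Nx \ X).card : ℝ) := by
    exact_mod_cast hb1
  have hbd2 : K * a / (c + l * a) - b ≤ ((NA \ X).card : ℝ) := by
    have h2 : (NA.card : ℝ) ≤ ((NA \ X).card : ℝ) + b := by
      rw [hbdef]; exact_mod_cast hb2
    linarith
  have hbd3 : K * b / (c + l * b) - a ≤ ((NB \ X).card : ℝ) := by
    have h2 : (NB.card : ℝ) ≤ ((NB \ X).card : ℝ) + a := by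
      rw [hadef]; exact_mod_cast hb3
    linarith
  have hbdA0 : (0:ℝ) ≤ ((NA \ X).card : ℝ) := Nat.cast_nonneg _
  have hbdB0 : (0:ℝ) ≤ ((NB \ X).card : ℝ) := Nat.cast_nonneg _
  have hXcast : (X.card : ℝ) = a + b := by
    rw [hcardX, hadef, hbdef]; push_cast; ring
  rw [hfG, hXcast]
  rcases le_or_gt (a + b) (K * b / (c + l * b) + b) with hcase1 | hcase1
  · rcases le_or_gt (a + b) (K * a / (c + l * a) + a) with hcase2 | hcase2
    · have hz_a : z ≤ a := hinv a ha0 hcase2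
      have hz_b : z ≤ b := hinv b hb0 hcase1
      have four := Gfour (zz := z) (a := a) (b := b) (s := a + b - z)
        hK' hc hl z0 hz_b hz_a (by ring)
      linarith
    · have hz_b : z ≤ b := hinv b hb0 hcase1
      have hz_a : a < z := hinv2 a ha0 hcase2
      have hs0 : 0 ≤ a + b - z := by linarith
      have hGs : K * (a + b - z) / (c + l * (a + b - z)) ≤ K * b / (c + l * b) :=
        Gmono hK' hc hl hs0 (by linarith)
      linarith
  · have hba : b < a := by linarith
    have hz_a : z ≤ a := by
      apply hinv a ha0
      have hmb : K * b / (c + l * b) ≤ K * a / (c + l * a) :=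
        Gmono hK' hc hl hb0 (le_of_lt hba)
      linarith
    have hz_b : b < z := hinv2 b hb0 (by linarith)
    have hs0 : 0 ≤ a + b - z := by linarith
    have hGs : K * (a + b - z) / (c + l * (a + b - z)) ≤ K * a / (c + l * a) :=
      Gmono hK' hc hl hs0 (by linarith)
    linarith
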